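/- Let m = p₁⋯p_k with p₁ < ⋯ < p_k odd primes, k ≥ 1, and h_m(X) = (X^m − 1)/Φ_m(X). Then for any complex x with |x| = 1, |h_m(x)| ≤ 2·m^{2^{k−1}/k}. Consequently, if n is a positive integer with greatest odd squarefree divisor m > 1 and ω(n) ≥ k, then |h_m(x)| ≤ 2·n^{2^{ω(n)−1}/ω(n)} for |x| = 1. -/

import Mathlib

open Polynomial Finset

namespace HBound

noncomputable def l1 (f : ℤ[X]) : ℕ := ∑ j ∈ f.support, (f.coeff j).natAbs

lemma natAbs_sum_le {ι : Type*} {s : Finset ι} (f : ι → ℤ) :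
    (∑ j ∈ s, f j).natAbs ≤ ∑ j ∈ s, (f j).natAbs := by
  have h : |∑ j ∈ s, f j| ≤ ∑ j ∈ s, |f j| := Finset.abs_sum_le_sum_abs _ _
  have h2 : (∑ j ∈ s, |f j|) = ((∑ j ∈ s, (f j).natAbs : ℕ) : ℤ) := by push_cast; rfl
  rw [Int.abs_eq_natAbs, h2] at h
  exact_mod_cast h

lemma sum_natAbs_le (f : ℤ[X]) (s : Finset ℕ) :
    ∑ j ∈ s, (f.coeff j).natAbs ≤ l1 f := by
  rw [l1]
  rw [show (∑ j ∈ s, (f.coeff j).natAbs)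
      = ∑ j ∈ s.filter (fun j => j ∈ f.support), (f.coeff j).natAbs from
    (Finset.sum_filter_of_ne (fun x _ hx => Polynomial.mem_support_iff.2
      (fun h => hx (by simp [h])))).symm]
  exact Finset.sum_le_sum_of_subset (fun x hx => (Finset.mem_filter.1 hx).2)

lemma l1_eq_sum_range (f : ℤ[X]) {N : ℕ} (h : f.natDegree < N) :
    l1 f = ∑ j ∈ Finset.range N, (f.coeff j).natAbs := by
  rw [l1]
  exact Finset.sum_subset (Polynomial.supp_subset_range h)
    (fun x _ hx => by simp [Polynomial.notMem_support_iff.1 hx])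

lemma abs_aeval_le (f : ℤ[X]) {x : ℂ} (hx : ‖x‖ = 1) :
    ‖aeval x f‖ ≤ (l1 f : ℝ) := by
  rw [Polynomial.aeval_eq_sum_range (R := ℤ) x,
    l1_eq_sum_range f (Nat.lt_succ_self _)]
  refine le_trans (norm_sum_le _ _) ?_
  push_cast
  refine Finset.sum_le_sum fun i _ => ?_
  rw [zsmul_eq_mul, norm_mul, norm_pow, hx, one_pow, mul_one, Complex.norm_intCast]
  rw [Nat.cast_natAbs]
  push_cast
  rfl

lemma l1_mul_le (f g : ℤ[X]) : l1 (f * g) ≤ l1 f * l1 g := by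
  set N := f.natDegree + g.natDegree + 1 with hN
  have hfg : (f * g).natDegree < N := lt_of_le_of_lt (natDegree_mul_le) (by omega)
  rw [l1_eq_sum_range _ hfg, l1_eq_sum_range f (show f.natDegree < N by omega),
    l1_eq_sum_range g (show g.natDegree < N by omega)]
  calc ∑ n ∈ range N, ((f * g).coeff n).natAbs
      ≤ ∑ n ∈ range N, ∑ p ∈ Finset.HasAntidiagonal.antidiagonal n,
          (f.coeff p.1).natAbs * (g.coeff p.2).natAbs := by
        refine Finset.sum_le_sum fun n _ => ?_
        rw [Polynomial.coeff_mul]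
        refine le_trans (natAbs_sum_le _) ?_
        refine Finset.sum_le_sum fun p _ => ?_
        rw [Int.natAbs_mul]
    _ = ∑ p ∈ (range N).biUnion (fun n => Finset.HasAntidiagonal.antidiagonal n),
          (f.coeff p.1).natAbs * (g.coeff p.2).natAbs := by
        refine (Finset.sum_biUnion ?_).symm
        intro a _ b _ hab
        simp only [Finset.disjoint_left]
        intro p hp hq
        rw [Finset.HasAntidiagonal.mem_antidiagonal] at hp hq
        exact hab (hp ▸ hq)
    _ ≤ ∑ p ∈ (range N) ×ˢ (range N),
          (f.coeff p.1).natAbs * (g.coeff p.2).natAbs := by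
        refine Finset.sum_le_sum_of_subset ?_
        intro p hp
        rcases Finset.mem_biUnion.1 hp with ⟨n, hn, hpn⟩
        rw [Finset.HasAntidiagonal.mem_antidiagonal] at hpn
        rw [Finset.mem_range] at hn
        exact Finset.mem_product.2 ⟨Finset.mem_range.2 (by omega),
          Finset.mem_range.2 (by omega)⟩
    _ = (∑ n ∈ range N, (f.coeff n).natAbs) * ∑ n ∈ range N, (g.coeff n).natAbs := by
        rw [Finset.sum_mul_sum, ← Finset.sum_product']

lemma l1_expand_le (p : ℕ) (hp : 0 < p) (f : ℤ[X]) :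
    l1 (Polynomial.expand ℤ p f) ≤ l1 f := by
  have hmem : ∀ j ∈ (Polynomial.expand ℤ p f).support, p ∣ j := by
    intro j hj
    by_contra hdvd
    exact Polynomial.mem_support_iff.1 hj (by rw [Polynomial.coeff_expand hp, if_neg hdvd])
  have hcoeff : ∀ j ∈ (Polynomial.expand ℤ p f).support,
      ((Polynomial.expand ℤ p f).coeff j).natAbs = (f.coeff (j / p)).natAbs := by
    intro j hj
    rw [Polynomial.coeff_expand hp, if_pos (hmem j hj)]
  have hinj : ∀ a ∈ (Polynomial.expand ℤ p f).support,
      ∀ b ∈ (Polynomial.expand ℤ p f).support, a / p = b / p → a = b := by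
    intro a ha b hb hab
    have ha' := Nat.div_mul_cancel (hmem a ha)
    have hb' := Nat.div_mul_cancel (hmem b hb)
    rw [← ha', ← hb', hab]
  rw [l1, Finset.sum_congr rfl hcoeff]
  calc ∑ x ∈ (Polynomial.expand ℤ p f).support, (f.coeff (x / p)).natAbs
      = ∑ t ∈ (Polynomial.expand ℤ p f).support.image (fun j => j / p),
          (f.coeff t).natAbs := (Finset.sum_image (f := fun t => (f.coeff t).natAbs) hinj).symm
    _ ≤ l1 f := sum_natAbs_le f _

lemma key (P G : ℤ[X]) (m J I : ℕ) (hm : 0 < m) (hPG : P * (X ^ m - 1) = G)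
    (hdeg : P.natDegree ≤ 2 * J) (hJI : J < I * m) : l1 P ≤ I * l1 G := by
  have hrel : ∀ j, G.coeff j = (if m ≤ j then P.coeff (j - m) else 0) - P.coeff j := by
    intro j
    rw [← hPG, mul_sub, mul_one, Polynomial.coeff_sub, Polynomial.coeff_mul_X_pow']
  have hup : ∀ j, P.coeff j = -∑ i ∈ range (j / m + 1), G.coeff (j - i * m) := by
    intro j
    induction j using Nat.strong_induction_on with
    | _ j ih =>
      rcases lt_or_ge j m with hj | hj
      · rw [Nat.div_eq_of_lt hj]
        have h1 := hrel j
        rw [if_neg (by omega)] at h1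
        simp only [zero_add, range_one, Finset.sum_singleton, Nat.zero_mul, Nat.sub_zero]
        omega
      · have h1 := hrel j
        rw [if_pos hj] at h1
        have hrec : P.coeff j = P.coeff (j - m) - G.coeff j := by omega
        have hdiv : j / m = (j - m) / m + 1 := Nat.div_eq_sub_div hm hj
        have hidx : ∀ i : ℕ, j - (i + 1) * m = j - m - i * m := by
          intro i; rw [add_mul, one_mul]; omega
        have hsum : ∑ i ∈ range (j / m + 1), G.coeff (j - i * m)
            = (∑ i ∈ range ((j - m) / m + 1), G.coeff (j - m - i * m)) + G.coeff j := by
          rw [hdiv, Finset.sum_range_succ']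
          congr 1
          · exact Finset.sum_congr rfl fun i _ => by rw [hidx i]
          · rw [Nat.zero_mul, Nat.sub_zero]
        rw [hrec, ih (j - m) (by omega), hsum]
        ring
  have hdown : ∀ (i : ℕ) (j : ℕ),
      P.coeff j = P.coeff (j + i * m) + ∑ t ∈ range i, G.coeff (j + (t + 1) * m) := by
    intro i
    induction i with
    | zero => simp
    | succ i ih =>
      intro j
      have h1 := hrel (j + (i + 1) * m)
      have hmle : m ≤ j + (i + 1) * m := by
        have : m ≤ (i + 1) * m := Nat.le_mul_of_pos_left m (by omega)
        omega
      rw [if_pos hmle] at h1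
      have h2 : j + (i + 1) * m - m = j + i * m := by
        rw [add_mul, one_mul]; omega
      rw [h2] at h1
      rw [ih j, Finset.sum_range_succ]
      linarith [h1]
  have hup' : ∀ j, (P.coeff j).natAbs
      ≤ ∑ i ∈ range (j / m + 1), (G.coeff (j - i * m)).natAbs := by
    intro j
    rw [hup j, Int.natAbs_neg]
    exact natAbs_sum_le _
  have hdown' : ∀ j, J < j → (P.coeff j).natAbs
      ≤ ∑ t ∈ range I, (G.coeff (j + (t + 1) * m)).natAbs := by
    intro j hj
    have h0 : P.coeff (j + I * m) = 0 :=
      Polynomial.coeff_eq_zero_of_natDegree_lt (by omega)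
    have h1 := hdown I j
    rw [h0, zero_add] at h1
    rw [h1]
    exact natAbs_sum_le _
  set S1 : ℕ := ∑ t ∈ range (J + 1), (G.coeff t).natAbs with hS1
  set S2 : ℕ := ∑ u ∈ G.support.filter (fun u => ¬ u ≤ J), (G.coeff u).natAbs with hS2
  have half1 : ∑ j ∈ range (J + 1), (P.coeff j).natAbs ≤ I * S1 := by
    calc ∑ j ∈ range (J + 1), (P.coeff j).natAbs
        ≤ ∑ j ∈ range (J + 1), ∑ i ∈ range I,
            (if i * m ≤ j then (G.coeff (j - i * m)).natAbs else 0) := by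
          refine Finset.sum_le_sum fun j hj => ?_
          refine le_trans (hup' j) ?_
          rw [mem_range] at hj
          have hjI : j / m < I := by
            rw [Nat.div_lt_iff_lt_mul hm]
            calc j ≤ J := by omega
              _ < I * m := hJI
          have hstep : ∑ i ∈ range (j / m + 1), (G.coeff (j - i * m)).natAbs
              = ∑ i ∈ range (j / m + 1),
                  (if i * m ≤ j then (G.coeff (j - i * m)).natAbs else 0) := by
            refine Finset.sum_congr rfl fun i hi => ?_
            rw [mem_range] at hi
            have h3 : i * m ≤ (j / m) * m := Nat.mul_le_mul_right _ (by omega)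
            have h4 := Nat.div_mul_le_self j m
            rw [if_pos (by omega)]
          rw [hstep]
          exact Finset.sum_le_sum_of_subset (Finset.range_subset_range.2 (by omega))
      _ = ∑ i ∈ range I, ∑ j ∈ range (J + 1),
            (if i * m ≤ j then (G.coeff (j - i * m)).natAbs else 0) := Finset.sum_comm
      _ ≤ ∑ _i ∈ range I, S1 := by
          refine Finset.sum_le_sum fun i _ => ?_
          rw [← Finset.sum_filter]
          have hinj : ∀ a ∈ (range (J + 1)).filter (fun j => i * m ≤ j),
              ∀ b ∈ (range (J + 1)).filter (fun j => i * m ≤ j),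
                a - i * m = b - i * m → a = b := by
            intro a ha b hb hab
            rw [mem_filter] at ha hb
            omega
          rw [show (∑ j ∈ (range (J + 1)).filter (fun j => i * m ≤ j),
              (G.coeff (j - i * m)).natAbs)
            = ∑ t ∈ ((range (J + 1)).filter (fun j => i * m ≤ j)).image
                (fun j => j - i * m), (G.coeff t).natAbs from
            (Finset.sum_image (f := fun t => (G.coeff t).natAbs) hinj).symm]
          refine Finset.sum_le_sum_of_subset ?_
          intro t ht
          rcases Finset.mem_image.1 ht with ⟨j, hj, rfl⟩
          rw [mem_filter, mem_range] at hj
          exact mem_range.2 (by omega)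
      _ = I * S1 := by simp [Finset.sum_const, Finset.card_range]
  have half2 : ∑ j ∈ Finset.Ico (J + 1) (2 * J + 1), (P.coeff j).natAbs ≤ I * S2 := by
    calc ∑ j ∈ Finset.Ico (J + 1) (2 * J + 1), (P.coeff j).natAbs
        ≤ ∑ j ∈ Finset.Ico (J + 1) (2 * J + 1), ∑ t ∈ range I,
            (G.coeff (j + (t + 1) * m)).natAbs := by
          refine Finset.sum_le_sum fun j hj => ?_
          rw [Finset.mem_Ico] at hj
          exact hdown' j (by omega)
      _ = ∑ t ∈ range I, ∑ j ∈ Finset.Ico (J + 1) (2 * J + 1),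
            (G.coeff (j + (t + 1) * m)).natAbs := Finset.sum_comm
      _ ≤ ∑ _t ∈ range I, S2 := by
          refine Finset.sum_le_sum fun t _ => ?_
          rw [show (∑ j ∈ Finset.Ico (J + 1) (2 * J + 1), (G.coeff (j + (t + 1) * m)).natAbs)
            = ∑ j ∈ (Finset.Ico (J + 1) (2 * J + 1)).filter
                (fun j => (j + (t + 1) * m) ∈ G.support), (G.coeff (j + (t + 1) * m)).natAbs from
            (Finset.sum_filter_of_ne (fun x _ hx => Polynomial.mem_support_iff.2
              (fun h => hx (by simp [h])))).symm]
          have hinj : ∀ a ∈ (Finset.Ico (J + 1) (2 * J + 1)).filter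
                (fun j => (j + (t + 1) * m) ∈ G.support),
              ∀ b ∈ (Finset.Ico (J + 1) (2 * J + 1)).filter
                (fun j => (j + (t + 1) * m) ∈ G.support),
                a + (t + 1) * m = b + (t + 1) * m → a = b := by
            intro a _ b _ hab; omega
          rw [show (∑ j ∈ (Finset.Ico (J + 1) (2 * J + 1)).filter
                (fun j => (j + (t + 1) * m) ∈ G.support), (G.coeff (j + (t + 1) * m)).natAbs)
            = ∑ u ∈ ((Finset.Ico (J + 1) (2 * J + 1)).filter
                (fun j => (j + (t + 1) * m) ∈ G.support)).image (fun j => j + (t + 1) * m),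
                (G.coeff u).natAbs from
            (Finset.sum_image (f := fun u => (G.coeff u).natAbs) hinj).symm]
          refine Finset.sum_le_sum_of_subset ?_
          intro u hu
          rcases Finset.mem_image.1 hu with ⟨j, hj, rfl⟩
          rw [mem_filter, Finset.mem_Ico] at hj
          refine Finset.mem_filter.2 ⟨hj.2, ?_⟩
          have : m ≤ (t + 1) * m := Nat.le_mul_of_pos_left m (by omega)
          omega
      _ = I * S2 := by simp [Finset.sum_const, Finset.card_range]
  have hglue : S1 + S2 = l1 G := by
    have hS1' : S1 = ∑ u ∈ G.support.filter (fun u => u ≤ J), (G.coeff u).natAbs := by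
      rw [hS1]
      rw [show (∑ t ∈ range (J + 1), (G.coeff t).natAbs)
          = ∑ t ∈ (range (J + 1)).filter (fun t => t ∈ G.support), (G.coeff t).natAbs from
        (Finset.sum_filter_of_ne (fun x _ hx => Polynomial.mem_support_iff.2
          (fun h => hx (by simp [h])))).symm]
      refine Finset.sum_congr ?_ (fun _ _ => rfl)
      ext u
      simp only [mem_filter, mem_range]
      constructor
      · rintro ⟨h1, h2⟩; exact ⟨h2, by omega⟩
      · rintro ⟨h1, h2⟩; exact ⟨by omega, h1⟩
    rw [hS1', hS2, l1]
    exact Finset.sum_filter_add_sum_filter_not _ _ _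
  calc l1 P = ∑ j ∈ range (2 * J + 1), (P.coeff j).natAbs :=
        l1_eq_sum_range P (by omega)
    _ = ∑ j ∈ range (J + 1), (P.coeff j).natAbs
        + ∑ j ∈ Finset.Ico (J + 1) (2 * J + 1), (P.coeff j).natAbs := by
        rw [Finset.range_eq_Ico, ← Finset.sum_Ico_consecutive _ (by omega : 0 ≤ J + 1)
          (by omega : J + 1 ≤ 2 * J + 1), ← Finset.range_eq_Ico]
    _ ≤ I * S1 + I * S2 := Nat.add_le_add half1 half2
    _ = I * (S1 + S2) := (Nat.mul_add _ _ _).symm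
    _ = I * l1 G := by rw [hglue]

lemma cyclo_mul_h (n : ℕ) :
    cyclotomic n ℤ * ((X ^ n - 1 : ℤ[X]) /ₘ cyclotomic n ℤ) = X ^ n - 1 := by
  have hmon := cyclotomic.monic n ℤ
  have hd : cyclotomic n ℤ ∣ X ^ n - 1 := cyclotomic.dvd_X_pow_sub_one n ℤ
  conv_rhs => rw [← Polynomial.modByMonic_add_div (X ^ n - 1 : ℤ[X]) (cyclotomic n ℤ)]
  rw [(Polynomial.modByMonic_eq_zero_iff_dvd hmon).2 hd, zero_add]

lemma h_prime (p : ℕ) (hp : p.Prime) :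
    (X ^ p - 1 : ℤ[X]) /ₘ cyclotomic p ℤ = X - 1 := by
  have h1 : (X ^ p - 1 : ℤ[X]) = cyclotomic p ℤ * (X - 1) := by
    rw [← prod_cyclotomic_eq_X_pow_sub_one hp.pos ℤ, hp.divisors,
      Finset.prod_pair hp.one_lt.ne, cyclotomic_one, mul_comm]
  apply mul_left_cancel₀ (cyclotomic_ne_zero p ℤ)
  rw [cyclo_mul_h p, h1]

lemma expand_X_pow_sub_one (p n : ℕ) :
    Polynomial.expand ℤ p ((X : ℤ[X]) ^ n - 1) = X ^ (n * p) - 1 := by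
  rw [map_sub, map_pow, Polynomial.expand_X, map_one, ← pow_mul, mul_comm]

lemma h_step (m p : ℕ) (hp : p.Prime) (hpm : ¬ p ∣ m) :
    (X ^ (m * p) - 1 : ℤ[X]) /ₘ cyclotomic (m * p) ℤ
      = Polynomial.expand ℤ p ((X ^ m - 1 : ℤ[X]) /ₘ cyclotomic m ℤ) * cyclotomic m ℤ := by
  apply mul_left_cancel₀ (cyclotomic_ne_zero (m * p) ℤ)
  rw [cyclo_mul_h (m * p)]
  calc (X ^ (m * p) - 1 : ℤ[X])
      = Polynomial.expand ℤ p ((X ^ m - 1 : ℤ[X])) := (expand_X_pow_sub_one p m).symm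
    _ = Polynomial.expand ℤ p (cyclotomic m ℤ * ((X ^ m - 1 : ℤ[X]) /ₘ cyclotomic m ℤ)) := by
        rw [cyclo_mul_h m]
    _ = (cyclotomic (m * p) ℤ * cyclotomic m ℤ)
        * Polynomial.expand ℤ p ((X ^ m - 1 : ℤ[X]) /ₘ cyclotomic m ℤ) := by
        rw [map_mul, cyclotomic_expand_eq_cyclotomic_mul hp hpm]
    _ = cyclotomic (m * p) ℤ
        * (Polynomial.expand ℤ p ((X ^ m - 1 : ℤ[X]) /ₘ cyclotomic m ℤ) * cyclotomic m ℤ) := by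
        ring

lemma phi_step (m p : ℕ) (hp : p.Prime) (hpm : ¬ p ∣ m) :
    cyclotomic (m * p) ℤ * (X ^ m - 1 : ℤ[X])
      = Polynomial.expand ℤ p (cyclotomic m ℤ) * ((X ^ m - 1 : ℤ[X]) /ₘ cyclotomic m ℤ) := by
  rw [cyclotomic_expand_eq_cyclotomic_mul hp hpm, mul_assoc, cyclo_mul_h m]

lemma l1_X_sub_one : l1 (X - 1 : ℤ[X]) ≤ 2 := by
  have h1 : (X - 1 : ℤ[X]) = X - C 1 := by rw [map_one]
  have hdeg : (X - 1 : ℤ[X]).natDegree < 2 := by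
    rw [h1, Polynomial.natDegree_X_sub_C]; omega
  rw [l1_eq_sum_range _ hdeg, Finset.sum_range_succ, Finset.sum_range_one]
  simp [Polynomial.coeff_sub, Polynomial.coeff_one]

lemma l1_cyclotomic_prime (p : ℕ) (hp : p.Prime) : l1 (cyclotomic p ℤ) ≤ p := by
  haveI : Fact p.Prime := ⟨hp⟩
  have hdeg : (cyclotomic p ℤ).natDegree < p := by
    rw [natDegree_cyclotomic]
    exact Nat.totient_lt p hp.one_lt
  rw [l1_eq_sum_range _ hdeg]
  have hco : ∀ j ∈ range p, ((cyclotomic p ℤ).coeff j).natAbs ≤ 1 := by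
    intro j hj
    rw [cyclotomic_prime, Polynomial.finset_sum_coeff]
    simp only [Polynomial.coeff_X_pow]
    rw [Finset.sum_ite_eq (range p) j (fun _ => (1:ℤ)), if_pos hj]
    rfl
  calc ∑ j ∈ range p, ((cyclotomic p ℤ).coeff j).natAbs
      ≤ ∑ _j ∈ range p, 1 := Finset.sum_le_sum hco
    _ = p := by simp

lemma Qsucc (p : ℕ → ℕ) (k : ℕ) :
    ∏ i ∈ range (k + 1), p i ^ 2 ^ (k - i)
      = (∏ i ∈ range k, p i ^ 2 ^ (k - 1 - i)) ^ 2 * p k := by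
  rw [Finset.prod_range_succ, Nat.sub_self, pow_zero, pow_one]
  congr 1
  rw [← Finset.prod_pow]
  refine Finset.prod_congr rfl fun i hi => ?_
  rw [mem_range] at hi
  rw [← pow_mul]
  congr 1
  have h1 : k - i = (k - 1 - i) + 1 := by omega
  rw [h1, pow_succ]

lemma main_ind (p : ℕ → ℕ) (k : ℕ) :
    (∀ i, i ≤ k → (p i).Prime) → (∀ i, i ≤ k → Odd (p i)) →
    (∀ i j, i < j → j ≤ k → p i < p j) →
    l1 ((X ^ (∏ i ∈ range (k + 1), p i) - 1 : ℤ[X])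
        /ₘ cyclotomic (∏ i ∈ range (k + 1), p i) ℤ)
      ≤ 2 * ∏ i ∈ range k, p i ^ 2 ^ (k - 1 - i)
    ∧ l1 (cyclotomic (∏ i ∈ range (k + 1), p i) ℤ)
      ≤ p k * ∏ i ∈ range k, p i ^ 2 ^ (k - 1 - i) := by
  induction k with
  | zero =>
    intro hprime _ _
    have h0 : ∏ i ∈ range 1, p i = p 0 := by rw [Finset.prod_range_one]
    rw [h0]
    simp only [range_zero, Finset.prod_empty, mul_one]
    constructor
    · rw [h_prime (p 0) (hprime 0 le_rfl)]
      exact l1_X_sub_one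
    · exact l1_cyclotomic_prime (p 0) (hprime 0 le_rfl)
  | succ k ih =>
    intro hprime hodd hmono
    obtain ⟨ihh, ihphi⟩ := ih (fun i hi => hprime i (by omega)) (fun i hi => hodd i (by omega))
      (fun i j hij hj => hmono i j hij (by omega))
    set m := ∏ i ∈ range (k + 1), p i with hmdef
    set q := p (k + 1) with hqdef
    have hq : q.Prime := hprime (k + 1) le_rfl
    have hqodd : Odd q := hodd (k + 1) le_rfl
    have hq3 : 3 ≤ q := by
      have := hq.two_le
      rcases hqodd with ⟨t, ht⟩
      omega
    have hcop : Nat.Coprime q m := by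
      refine Nat.Coprime.prod_right fun i hi => ?_
      rw [mem_range] at hi
      have hlt : p i < q := hmono i (k + 1) (by omega) le_rfl
      exact (Nat.coprime_primes hq (hprime i (by omega))).2 (by omega)
    have hqm : ¬ q ∣ m := (Nat.Prime.coprime_iff_not_dvd hq).1 hcop
    have hm1 : 1 < m := by
      have h1 : p 0 ≤ m := by
        refine Finset.single_le_prod' (fun i hi => ?_) (a := 0) (Finset.mem_range.2 (by omega))
        exact (hprime i (by rw [Finset.mem_range] at hi; omega)).one_lt.le
      have h2 := (hprime 0 (by omega)).two_le
      omega
    have hm0 : 0 < m := by omega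
    have hM : ∏ i ∈ range (k + 2), p i = m * q := by
      rw [Finset.prod_range_succ]
    set Q := ∏ i ∈ range k, p i ^ 2 ^ (k - 1 - i) with hQdef
    have hQ1 : ∏ i ∈ range (k + 1), p i ^ 2 ^ (k + 1 - 1 - i) = Q ^ 2 * p k := by
      have := Qsucc p k
      simpa using this
    rw [hM, hQ1]
    constructor
    · rw [h_step m q hq hqm]
      calc l1 (Polynomial.expand ℤ q ((X ^ m - 1 : ℤ[X]) /ₘ cyclotomic m ℤ) * cyclotomic m ℤ)
          ≤ l1 (Polynomial.expand ℤ q ((X ^ m - 1 : ℤ[X]) /ₘ cyclotomic m ℤ))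
            * l1 (cyclotomic m ℤ) := l1_mul_le _ _
        _ ≤ l1 ((X ^ m - 1 : ℤ[X]) /ₘ cyclotomic m ℤ) * l1 (cyclotomic m ℤ) :=
            Nat.mul_le_mul_right _ (l1_expand_le q hq.pos _)
        _ ≤ (2 * Q) * (p k * Q) := Nat.mul_le_mul ihh ihphi
        _ = 2 * (Q ^ 2 * p k) := by ring
    · obtain ⟨t, ht⟩ := hqodd
      have ht1 : 1 ≤ t := by omega
      set J := m.totient * t with hJdef
      set I := J / m + 1 with hIdef
      have hdegP : (cyclotomic (m * q) ℤ).natDegree ≤ 2 * J := by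
        rw [natDegree_cyclotomic, Nat.totient_mul (Nat.Coprime.symm hcop),
          Nat.totient_prime hq]
        have hq1 : q - 1 = 2 * t := by omega
        rw [hq1]
        exact le_of_eq (by ring)
      have hJI : J < I * m := by
        have h1 : m * (J / m) + J % m = J := Nat.div_add_mod J m
        have h2 : J % m < m := Nat.mod_lt J hm0
        have h3 : J < m * (J / m) + m := by omega
        calc J < m * (J / m) + m := h3
          _ = (J / m + 1) * m := by ring
      have hkey := key (cyclotomic (m * q) ℤ)
        (Polynomial.expand ℤ q (cyclotomic m ℤ) * ((X ^ m - 1 : ℤ[X]) /ₘ cyclotomic m ℤ))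
        m J I hm0 (phi_step m q hq hqm) hdegP hJI
      have hIle : I ≤ t := by
        have h1 : J < t * m := by
          rw [hJdef]
          have := Nat.totient_lt m hm1
          calc m.totient * t < m * t := by
                exact Nat.mul_lt_mul_of_lt_of_le this le_rfl (by omega)
            _ = t * m := Nat.mul_comm m t
        have h2 : J / m < t := by
          rw [Nat.div_lt_iff_lt_mul hm0]
          exact h1
        omega
      calc l1 (cyclotomic (m * q) ℤ)
          ≤ I * l1 (Polynomial.expand ℤ q (cyclotomic m ℤ)
              * ((X ^ m - 1 : ℤ[X]) /ₘ cyclotomic m ℤ)) := hkey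
        _ ≤ I * (l1 (Polynomial.expand ℤ q (cyclotomic m ℤ))
              * l1 ((X ^ m - 1 : ℤ[X]) /ₘ cyclotomic m ℤ)) :=
            Nat.mul_le_mul_left _ (l1_mul_le _ _)
        _ ≤ I * (l1 (cyclotomic m ℤ) * l1 ((X ^ m - 1 : ℤ[X]) /ₘ cyclotomic m ℤ)) :=
            Nat.mul_le_mul_left _ (Nat.mul_le_mul_right _ (l1_expand_le q hq.pos _))
        _ ≤ t * ((p k * Q) * (2 * Q)) :=
            Nat.mul_le_mul hIle (Nat.mul_le_mul ihphi ihh)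
        _ = (2 * t) * (Q ^ 2 * p k) := by ring
        _ ≤ q * (Q ^ 2 * p k) := Nat.mul_le_mul_right _ (by omega)

lemma two_pow_sum (n : ℕ) : ∑ i ∈ range n, 2 ^ i = 2 ^ n - 1 := by
  induction n with
  | zero => simp
  | succ n ih =>
    rw [Finset.sum_range_succ, ih]
    have := Nat.one_le_two_pow (n := n)
    ring_nf
    omega

lemma cheb (K : ℕ) (p : ℕ → ℕ) (h2 : ∀ i, i ≤ K → 2 ≤ p i)
    (hmono : ∀ i j, i < j → j ≤ K → p i < p j) :
    ((∏ i ∈ range K, p i ^ 2 ^ (K - 1 - i) : ℕ) : ℝ)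
      ≤ ((∏ i ∈ range (K + 1), p i : ℕ) : ℝ) ^ ((2 ^ K : ℝ) / ((K : ℝ) + 1)) := by
  set e : ℕ → ℕ := fun i => 2 ^ (K - i) / 2 with hedef
  have he : ∀ i, i < K → e i = 2 ^ (K - 1 - i) := by
    intro i hi
    have h1 : K - i = (K - 1 - i) + 1 := by omega
    rw [hedef]
    simp only
    rw [h1, pow_succ]
    exact Nat.mul_div_cancel _ (by norm_num)
  have he' : e K = 0 := by
    rw [hedef]
    simp
  have hQe : (∏ i ∈ range K, p i ^ 2 ^ (K - 1 - i))
      = ∏ i ∈ range (K + 1), p i ^ e i := by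
    rw [Finset.prod_range_succ, he', pow_zero, mul_one]
    exact Finset.prod_congr rfl fun i hi => by rw [he i (mem_range.1 hi)]
  have hppos : ∀ i ∈ range (K + 1), (0 : ℝ) < (p i : ℝ) := by
    intro i hi
    rw [mem_range] at hi
    have := h2 i (by omega)
    positivity
  have hP1 : ∀ i ∈ range (K + 1), (1 : ℝ) ≤ (p i : ℝ) := by
    intro i hi
    rw [mem_range] at hi
    have := h2 i (by omega)
    exact_mod_cast by omega
  -- antivary
  have hanti : AntivaryOn (fun i => (e i : ℝ)) (fun i => Real.log (p i))
      (↑(range (K + 1)) : Set ℕ) := by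
    intro i hi j hj hlt
    have hi' : i < K + 1 := by simpa using hi
    have hj' : j < K + 1 := by simpa using hj
    have hij : p i < p j := by
      by_contra hcon
      push_neg at hcon
      have : Real.log (p j) ≤ Real.log (p i) :=
        Real.log_le_log (by have := h2 j (by omega); positivity) (by exact_mod_cast hcon)
      linarith
    have hij' : i < j := by
      by_contra hcon
      push_neg at hcon
      rcases Nat.lt_or_ge j i with h | h
      · have := hmono j i h (by omega)
        omega
      · have hij2 : i = j := by omega
        rw [hij2] at hij
        omega
    have : e j ≤ e i := by
      rw [hedef]
      simp only
      exact Nat.div_le_div_right (Nat.pow_le_pow_right (by norm_num) (by omega))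
    show ((e j : ℕ) : ℝ) ≤ ((e i : ℕ) : ℝ)
    exact_mod_cast this
  have hcheb := hanti.card_mul_sum_le_sum_mul_sum
  rw [Finset.card_range] at hcheb
  have hnat : ∑ i ∈ range (K + 1), e i = 2 ^ K - 1 := by
    rw [Finset.sum_range_succ, he', add_zero,
      Finset.sum_congr rfl (fun i hi => he i (mem_range.1 hi)),
      Finset.sum_range_reflect (fun i => 2 ^ i) K, two_pow_sum]
  have hesum : (∑ i ∈ range (K + 1), (e i : ℝ)) ≤ 2 ^ K := by
    have h1 : ((∑ i ∈ range (K + 1), e i : ℕ) : ℝ) = ∑ i ∈ range (K + 1), (e i : ℝ) := by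
      push_cast; rfl
    rw [← h1, hnat]
    have h2 : (1:ℕ) ≤ 2 ^ K := Nat.one_le_two_pow
    rw [Nat.cast_sub h2]
    push_cast
    linarith
  set SP : ℝ := ((∏ i ∈ range (K + 1), p i : ℕ) : ℝ) with hSP
  have hSPnat : 0 < ∏ i ∈ range (K + 1), p i := by
    refine Finset.prod_pos fun i hi => ?_
    have := h2 i (by rw [mem_range] at hi; omega)
    omega
  have hSPpos : 0 < SP := by rw [hSP]; exact_mod_cast hSPnat
  have hlogSP : Real.log SP = ∑ i ∈ range (K + 1), Real.log (p i) := by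
    rw [hSP]
    push_cast
    exact Real.log_prod (fun i hi => ne_of_gt (hppos i hi))
  have hlogSP_nonneg : 0 ≤ Real.log SP := by
    rw [hlogSP]
    exact Finset.sum_nonneg fun i hi => Real.log_nonneg (hP1 i hi)
  set LHS : ℝ := ((∏ i ∈ range K, p i ^ 2 ^ (K - 1 - i) : ℕ) : ℝ) with hLHS
  have hLHSnat : 0 < ∏ i ∈ range K, p i ^ 2 ^ (K - 1 - i) := by
    refine Finset.prod_pos fun i hi => ?_
    have := h2 i (by rw [mem_range] at hi; omega)
    exact pow_pos (by omega) _
  have hLHSpos : 0 < LHS := by rw [hLHS]; exact_mod_cast hLHSnat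
  have hLHSeq : LHS = ∏ i ∈ range (K + 1), (p i : ℝ) ^ (e i) := by
    rw [hLHS, hQe]
    push_cast
    rfl
  have hlogLHS : Real.log LHS = ∑ i ∈ range (K + 1), (e i : ℝ) * Real.log (p i) := by
    rw [hLHSeq, Real.log_prod (fun i hi => by
      have := hppos i hi
      positivity)]
    exact Finset.sum_congr rfl fun i hi => Real.log_pow _ _
  have hc2 : ((K:ℝ) + 1) * Real.log LHS ≤ 2 ^ K * Real.log SP := by
    rw [hlogLHS, hlogSP]
    calc ((K:ℝ) + 1) * ∑ i ∈ range (K + 1), (e i : ℝ) * Real.log (p i)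
        ≤ (∑ i ∈ range (K + 1), (e i : ℝ)) * ∑ i ∈ range (K + 1), Real.log (p i) := by
          have hcast : ((K:ℝ) + 1) = ((K + 1 : ℕ) : ℝ) := by push_cast; ring
          rw [hcast]
          exact hcheb
      _ ≤ 2 ^ K * ∑ i ∈ range (K + 1), Real.log (p i) := by
          refine mul_le_mul_of_nonneg_right hesum ?_
          exact Finset.sum_nonneg fun i hi => Real.log_nonneg (hP1 i hi)
  have hKpos : (0:ℝ) < (K:ℝ) + 1 := by positivity
  have hfinal : Real.log LHS ≤ Real.log SP * ((2 ^ K : ℝ) / ((K:ℝ) + 1)) := by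
    rw [mul_comm (Real.log SP), div_mul_eq_mul_div, le_div_iff₀ hKpos]
    calc Real.log LHS * ((K:ℝ) + 1) = ((K:ℝ) + 1) * Real.log LHS := by ring
      _ ≤ 2 ^ K * Real.log SP := hc2
  calc LHS = Real.exp (Real.log LHS) := (Real.exp_log hLHSpos).symm
    _ ≤ Real.exp (Real.log SP * ((2 ^ K : ℝ) / ((K:ℝ) + 1))) := Real.exp_le_exp.2 hfinal
    _ = SP ^ ((2 ^ K : ℝ) / ((K:ℝ) + 1)) := (Real.rpow_def_of_pos hSPpos _).symm

lemma exp_mono (a b : ℕ) (ha : 1 ≤ a) (hab : a ≤ b) :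
    ((2:ℝ) ^ (a - 1)) / (a:ℝ) ≤ ((2:ℝ) ^ (b - 1)) / (b:ℝ) := by
  induction b with
  | zero => omega
  | succ b ihb =>
    rcases Nat.lt_or_ge a (b + 1) with h | h
    · have hb1 : 1 ≤ b := by omega
      refine le_trans (ihb (by omega)) ?_
      have hK : b + 1 - 1 = b := by omega
      rw [hK]
      rw [div_le_div_iff₀ (by exact_mod_cast hb1 : (0:ℝ) < (b:ℝ)) (by positivity)]
      have h2 : (2:ℝ) ^ b = 2 ^ (b - 1) * 2 := by
        rw [← pow_succ]
        congr 1
        omega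
      rw [h2]
      push_cast
      have hp : (0:ℝ) < 2 ^ (b - 1) := by positivity
      have hbR : (1:ℝ) ≤ (b:ℝ) := by exact_mod_cast hb1
      nlinarith [mul_nonneg (le_of_lt hp) (sub_nonneg.2 hbR)]
    · have hab' : a = b + 1 := by omega
      rw [hab']

end HBound

open Polynomial

theorem h_bound_rpow (k : ℕ) (hk : 1 ≤ k) (p : ℕ → ℕ)
    (hprime : ∀ i < k, (p i).Prime) (hodd : ∀ i < k, Odd (p i))
    (hmono : ∀ i j, i < j → j < k → p i < p j) :
    (∀ x : ℂ, ‖x‖ = 1 →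
      ‖(aeval x
          ((X ^ (∏ i ∈ Finset.range k, p i) - 1 : Polynomial ℤ) /ₘ
            cyclotomic (∏ i ∈ Finset.range k, p i) ℤ))‖ ≤
        2 * (∏ i ∈ Finset.range k, p i : ℝ) ^ ((2 ^ (k - 1) : ℝ) / k)) ∧
    (∀ n : ℕ, 0 < n →
      (∏ q ∈ n.primeFactors.filter (· ≠ 2), q) = ∏ i ∈ Finset.range k, p i →
      1 < ∏ i ∈ Finset.range k, p i → k ≤ n.primeFactors.card →
      ∀ x : ℂ, ‖x‖ = 1 →
        ‖(aeval x
            ((X ^ (∏ i ∈ Finset.range k, p i) - 1 : Polynomial ℤ) /ₘ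
              cyclotomic (∏ i ∈ Finset.range k, p i) ℤ))‖ ≤
          2 * (n : ℝ) ^ ((2 ^ (n.primeFactors.card - 1) : ℝ) / n.primeFactors.card)) := by
  obtain ⟨K, rfl⟩ : ∃ K, k = K + 1 := ⟨k - 1, by omega⟩
  have hprime' : ∀ i, i ≤ K → (p i).Prime := fun i hi => hprime i (by omega)
  have hodd' : ∀ i, i ≤ K → Odd (p i) := fun i hi => hodd i (by omega)
  have hmono' : ∀ i j, i < j → j ≤ K → p i < p j := fun i j hij hj => hmono i j hij (by omega)
  have h2 : ∀ i, i ≤ K → 2 ≤ p i := fun i hi => (hprime' i hi).two_le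
  obtain ⟨Hh, _⟩ := HBound.main_ind p K hprime' hodd' hmono'
  have hcheb := HBound.cheb K p h2 hmono'
  have hexp : (K + 1 - 1) = K := by omega
  have hmain : ∀ x : ℂ, ‖x‖ = 1 →
      ‖(aeval x
          ((X ^ (∏ i ∈ Finset.range (K + 1), p i) - 1 : Polynomial ℤ) /ₘ
            cyclotomic (∏ i ∈ Finset.range (K + 1), p i) ℤ))‖ ≤
        2 * ((∏ i ∈ Finset.range (K + 1), p i : ℕ) : ℝ)
          ^ ((2 ^ (K + 1 - 1) : ℝ) / ((K + 1 : ℕ) : ℝ)) := by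
    intro x hx
    refine le_trans (HBound.abs_aeval_le _ hx) ?_
    have hcast : (HBound.l1 ((X ^ (∏ i ∈ Finset.range (K + 1), p i) - 1 : Polynomial ℤ) /ₘ
        cyclotomic (∏ i ∈ Finset.range (K + 1), p i) ℤ) : ℝ)
        ≤ 2 * ((∏ i ∈ Finset.range K, p i ^ 2 ^ (K - 1 - i) : ℕ) : ℝ) := by
      exact_mod_cast Hh
    refine le_trans hcast ?_
    have hrw : ((2 ^ (K + 1 - 1) : ℝ) / ((K + 1 : ℕ) : ℝ)) = ((2 ^ K : ℝ) / ((K:ℝ) + 1)) := by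
      rw [hexp]
      push_cast
      ring
    rw [hrw]
    linarith [hcheb]
  constructor
  · intro x hx
    have hres := hmain x hx
    rw [Nat.cast_prod] at hres
    exact hres
  · intro n hn hfilter hm1 hcard x hx
    refine le_trans (hmain x hx) ?_
    set ω := n.primeFactors.card with hω
    have hω1 : K + 1 ≤ ω := hcard
    have hmn : (∏ i ∈ Finset.range (K + 1), p i) ≤ n := by
      refine Nat.le_of_dvd hn ?_
      rw [← hfilter]
      exact dvd_trans (Finset.prod_dvd_prod_of_subset _ _ _ (Finset.filter_subset _ _))
        (Nat.prod_primeFactors_dvd n)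
    have hn1 : 1 < n := lt_of_lt_of_le hm1 hmn
    have hexpmono : ((2:ℝ) ^ (K + 1 - 1)) / ((K + 1 : ℕ) : ℝ)
        ≤ ((2:ℝ) ^ (ω - 1)) / (ω : ℝ) := HBound.exp_mono (K + 1) ω (by omega) hω1
    have hstep1 : ((∏ i ∈ Finset.range (K + 1), p i : ℕ) : ℝ)
          ^ ((2 ^ (K + 1 - 1) : ℝ) / ((K + 1 : ℕ) : ℝ))
        ≤ (n : ℝ) ^ ((2 ^ (K + 1 - 1) : ℝ) / ((K + 1 : ℕ) : ℝ)) := by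
      refine Real.rpow_le_rpow (by positivity) (by exact_mod_cast hmn) (by positivity)
    have hstep2 : (n : ℝ) ^ ((2 ^ (K + 1 - 1) : ℝ) / ((K + 1 : ℕ) : ℝ))
        ≤ (n : ℝ) ^ ((2 ^ (ω - 1) : ℝ) / (ω : ℝ)) := by
      refine Real.rpow_le_rpow_of_exponent_le (by exact_mod_cast hn1.le) hexpmono
    linarith
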